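/- Let q : [0,∞) → ℝ be locally integrable and suppose ∑_{n≥0} max_{n ≤ t ≤ n+1} (∫ₙᵗ q(s) ds)² < ∞. Then ∑_{n≥0} ( ∫ₙ^{n+2} g_n(t) dt · ∫ₙ^{n+2} 1/g_n(t) dt - 4 ) < ∞, where g_n(t) = exp(2∫ₙᵗ q(s) ds). -/

import Mathlib

open MeasureTheory Set intervalIntegral

set_option maxHeartbeats 1000000 in
theorem stmt_15 (q : ℝ → ℝ)
    (hloc : ∀ r : ℝ, 0 < r → IntegrableOn q (Icc 0 r))
    (hsum : Summable (fun n : ℕ =>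
      ⨆ t : Icc (n : ℝ) ((n : ℝ) + 1), (∫ s in (n : ℝ)..(t : ℝ), q s) ^ 2)) :
    Summable (fun n : ℕ =>
      (∫ t in (n : ℝ)..((n : ℝ) + 2), Real.exp (2 * ∫ s in (n : ℝ)..t, q s)) *
        (∫ t in (n : ℝ)..((n : ℝ) + 2), Real.exp (-(2 * ∫ s in (n : ℝ)..t, q s))) - 4) := by
  set F : ℕ → ℝ → ℝ := fun n t => ∫ s in (n : ℝ)..t, q s with hFdef
  set M : ℕ → ℝ := fun n => ⨆ t : Icc (n : ℝ) ((n : ℝ) + 1), (F n t) ^ 2 with hMdef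
  -- basic integrability on [n, n+2]
  have hqInt : ∀ n : ℕ, IntegrableOn q (Icc (n : ℝ) ((n : ℝ) + 2)) := by
    intro n
    refine (hloc ((n : ℝ) + 2) (by positivity)).mono_set ?_
    exact Icc_subset_Icc (by positivity) le_rfl
  have hq' : ∀ (n : ℕ) (c d : ℝ), c ∈ Icc (n : ℝ) ((n : ℝ) + 2) →
      d ∈ Icc (n : ℝ) ((n : ℝ) + 2) → IntervalIntegrable q volume c d := by
    intro n c d hc hd
    exact ((hqInt n).mono_set (uIcc_subset_Icc hc hd)).intervalIntegrable
  have huicc : ∀ n : ℕ, uIcc (n : ℝ) ((n : ℝ) + 2) = Icc (n : ℝ) ((n : ℝ) + 2) := by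
    intro n; exact uIcc_of_le (by linarith)
  -- continuity of the primitive
  have hFcont : ∀ n : ℕ, ContinuousOn (F n) (Icc (n : ℝ) ((n : ℝ) + 2)) := by
    intro n
    have := intervalIntegral.continuousOn_primitive_interval (a := (n : ℝ)) (b := (n : ℝ) + 2)
      (μ := volume) (f := q) (by rw [huicc n]; exact hqInt n)
    rwa [huicc n] at this
  -- the sup bounds each value
  have hsup : ∀ (k : ℕ) (t : ℝ), t ∈ Icc (k : ℝ) ((k : ℝ) + 1) → (F k t) ^ 2 ≤ M k := by
    intro k t ht
    have hcont : ContinuousOn (fun t => (F k t) ^ 2) (Icc (k : ℝ) ((k : ℝ) + 1)) :=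
      ((hFcont k).mono (Icc_subset_Icc le_rfl (by linarith))).pow 2
    have hbdd : BddAbove (range fun t : Icc (k : ℝ) ((k : ℝ) + 1) => (F k (t : ℝ)) ^ 2) := by
      apply BddAbove.mono _ ((isCompact_Icc.image_of_continuousOn hcont).bddAbove)
      rintro x ⟨t, rfl⟩
      exact ⟨t, t.2, rfl⟩
    exact le_ciSup hbdd (⟨t, ht⟩ : Icc (k : ℝ) ((k : ℝ) + 1))
  have hM0 : ∀ k : ℕ, 0 ≤ M k := by
    intro k
    have := hsup k (k : ℝ) (by constructor <;> [exact le_rfl; linarith])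
    simpa [hFdef, intervalIntegral.integral_same] using this
  set ε : ℕ → ℝ := fun n => 2 * M n + 2 * M (n + 1) with hεdef
  have hε0 : ∀ n, 0 ≤ ε n := fun n => by
    have := hM0 n; have := hM0 (n + 1); simp only [hεdef]; linarith
  -- key square bound on all of [n, n+2]
  have hF2 : ∀ (n : ℕ) (t : ℝ), t ∈ Icc (n : ℝ) ((n : ℝ) + 2) → (F n t) ^ 2 ≤ ε n := by
    intro n t ht
    rcases le_or_gt t ((n : ℝ) + 1) with h | h
    · have h1 := hsup n t ⟨ht.1, h⟩
      have h2 := hM0 (n + 1)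
      have h3 := hM0 n
      simp only [hεdef]; linarith
    · have hsplit : F n ((n : ℝ) + 1) + (∫ s in ((n : ℝ) + 1)..t, q s) = F n t := by
        exact intervalIntegral.integral_add_adjacent_intervals
          (hq' n (n : ℝ) ((n : ℝ) + 1) ⟨le_rfl, by linarith⟩ ⟨by linarith, by linarith⟩)
          (hq' n ((n : ℝ) + 1) t ⟨by linarith, by linarith⟩ ht)
      have h1 : (F n ((n : ℝ) + 1)) ^ 2 ≤ M n :=
        hsup n ((n : ℝ) + 1) ⟨by linarith, le_rfl⟩
      have h2 : (∫ s in ((n : ℝ) + 1)..t, q s) ^ 2 ≤ M (n + 1) := by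
        have h2' := hsup (n + 1) t (by push_cast; exact ⟨h.le, by linarith [ht.2]⟩)
        simp only [hFdef] at h2'
        push_cast at h2'
        exact h2'
      simp only [hεdef]
      rw [← hsplit]
      nlinarith [sq_nonneg (F n ((n : ℝ) + 1) - (∫ s in ((n : ℝ) + 1)..t, q s))]
  -- the main pointwise estimate
  have key : ∀ n : ℕ, ε n ≤ 1 / 16 →
      |(∫ t in (n : ℝ)..((n : ℝ) + 2), Real.exp (2 * F n t)) *
        (∫ t in (n : ℝ)..((n : ℝ) + 2), Real.exp (-(2 * F n t))) - 4| ≤ 68 * ε n := by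
    intro n hε
    set s : ℝ := Real.sqrt (ε n) with hsdef
    have hs0 : 0 ≤ s := Real.sqrt_nonneg _
    have hs2 : s ^ 2 = ε n := Real.sq_sqrt (hε0 n)
    have hs14 : s ≤ 1 / 4 := by
      have := Real.sqrt_le_sqrt hε
      rwa [show (1 / 16 : ℝ) = (1 / 4) ^ 2 by norm_num,
        Real.sqrt_sq (by norm_num : (0:ℝ) ≤ 1/4)] at this
    have hFs : ∀ t ∈ Icc (n : ℝ) ((n : ℝ) + 2), |F n t| ≤ s := by
      intro t ht
      have := Real.sqrt_le_sqrt (hF2 n t ht)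
      rwa [Real.sqrt_sq_eq_abs] at this
    have hIcc : uIoc (n : ℝ) ((n : ℝ) + 2) ⊆ Icc (n : ℝ) ((n : ℝ) + 2) := by
      rw [uIoc_of_le (by linarith)]; exact Ioc_subset_Icc_self
    -- integrability of the integrands
    have hFint : IntervalIntegrable (F n) volume (n : ℝ) ((n : ℝ) + 2) :=
      ContinuousOn.intervalIntegrable (by rw [huicc n]; exact hFcont n)
    have hexp1 : IntervalIntegrable (fun t => Real.exp (2 * F n t)) volume (n : ℝ) ((n : ℝ) + 2) := by
      apply ContinuousOn.intervalIntegrable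
      rw [huicc n]
      exact Real.continuous_exp.comp_continuousOn (continuousOn_const.mul (hFcont n))
    have hexp2 : IntervalIntegrable (fun t => Real.exp (-(2 * F n t))) volume (n : ℝ) ((n : ℝ) + 2) := by
      apply ContinuousOn.intervalIntegrable
      rw [huicc n]
      exact Real.continuous_exp.comp_continuousOn (continuousOn_const.mul (hFcont n)).neg
    set A : ℝ := ∫ t in (n : ℝ)..((n : ℝ) + 2), Real.exp (2 * F n t) with hAdef
    set B : ℝ := ∫ t in (n : ℝ)..((n : ℝ) + 2), Real.exp (-(2 * F n t)) with hBdef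
    set a : ℝ := ∫ t in (n : ℝ)..((n : ℝ) + 2), 2 * F n t with hadef
    have ha : |a| ≤ 4 * s := by
      have hb := intervalIntegral.norm_integral_le_of_norm_le_const (C := 2 * s)
        (f := fun t => 2 * F n t) (a := (n : ℝ)) (b := (n : ℝ) + 2) (fun x hx => by
          rw [Real.norm_eq_abs, abs_mul, abs_two]
          linarith [hFs x (hIcc hx)])
      rw [Real.norm_eq_abs, show (n : ℝ) + 2 - n = 2 by ring, abs_two] at hb
      rw [hadef]
      linarith
    have hone : IntervalIntegrable (fun _ : ℝ => (1 : ℝ)) volume (n : ℝ) ((n : ℝ) + 2) :=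
      intervalIntegrable_const
    have hint1 : (∫ t in (n : ℝ)..((n : ℝ) + 2), (1 + 2 * F n t)) = 2 + a := by
      rw [intervalIntegral.integral_add hone (hFint.const_mul 2)]
      simp [hadef]
    have hint2 : (∫ t in (n : ℝ)..((n : ℝ) + 2), (1 - 2 * F n t)) = 2 - a := by
      rw [intervalIntegral.integral_sub hone (hFint.const_mul 2)]
      simp [hadef]
    -- |A - (2 + a)| ≤ 8 ε n
    have hA : |A - (2 + a)| ≤ 8 * ε n := by
      have heq : A - (2 + a)
          = ∫ t in (n : ℝ)..((n : ℝ) + 2), (Real.exp (2 * F n t) - (1 + 2 * F n t)) := by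
        rw [intervalIntegral.integral_sub hexp1 (hone.add (hFint.const_mul 2)), hint1]
      have hb := intervalIntegral.norm_integral_le_of_norm_le_const (C := 4 * ε n)
        (f := fun t => Real.exp (2 * F n t) - (1 + 2 * F n t)) (a := (n : ℝ)) (b := (n : ℝ) + 2)
        (fun x hx => by
          have hx' := hIcc hx
          have h1 : |2 * F n x| ≤ 1 := by
            rw [abs_mul, abs_two]
            linarith [hFs x hx']
          have h3 := Real.abs_exp_sub_one_sub_id_le h1
          have h2 : (2 * F n x) ^ 2 ≤ 4 * ε n := by
            have := hF2 n x hx'; nlinarith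
          rw [Real.norm_eq_abs]
          calc |Real.exp (2 * F n x) - (1 + 2 * F n x)|
              = |Real.exp (2 * F n x) - 1 - 2 * F n x| := by ring_nf
            _ ≤ (2 * F n x) ^ 2 := h3
            _ ≤ 4 * ε n := h2)
      rw [Real.norm_eq_abs, show (n : ℝ) + 2 - n = 2 by ring, abs_two] at hb
      rw [heq]
      linarith
    have hB : |B - (2 - a)| ≤ 8 * ε n := by
      have heq : B - (2 - a)
          = ∫ t in (n : ℝ)..((n : ℝ) + 2), (Real.exp (-(2 * F n t)) - (1 - 2 * F n t)) := by
        rw [intervalIntegral.integral_sub hexp2 (hone.sub (hFint.const_mul 2)), hint2]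
      have hb := intervalIntegral.norm_integral_le_of_norm_le_const (C := 4 * ε n)
        (f := fun t => Real.exp (-(2 * F n t)) - (1 - 2 * F n t)) (a := (n : ℝ)) (b := (n : ℝ) + 2)
        (fun x hx => by
          have hx' := hIcc hx
          have h1 : |(-(2 * F n x))| ≤ 1 := by
            rw [abs_neg, abs_mul, abs_two]
            linarith [hFs x hx']
          have h3 := Real.abs_exp_sub_one_sub_id_le h1
          have h2 : (-(2 * F n x)) ^ 2 ≤ 4 * ε n := by
            have := hF2 n x hx'; nlinarith
          rw [Real.norm_eq_abs]
          calc |Real.exp (-(2 * F n x)) - (1 - 2 * F n x)|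
              = |Real.exp (-(2 * F n x)) - 1 - (-(2 * F n x))| := by ring_nf
            _ ≤ (-(2 * F n x)) ^ 2 := h3
            _ ≤ 4 * ε n := h2)
      rw [Real.norm_eq_abs, show (n : ℝ) + 2 - n = 2 by ring, abs_two] at hb
      rw [heq]
      linarith
    -- combine
    clear_value A B a s ε M F
    have hA1 := abs_le.mp hA
    have hB1 := abs_le.mp hB
    have ha1 := abs_le.mp ha
    have hε16 : ε n ≤ 1 / 16 := hε
    have hs4 : 4 * s ≤ 1 := by linarith
    have ha2 : a ^ 2 ≤ 16 * ε n := by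
      nlinarith [ha1.1, ha1.2, hs2, hs0, mul_nonneg (by linarith : (0:ℝ) ≤ 4*s - a)
        (by linarith : (0:ℝ) ≤ 4*s + a)]
    have hAb : |A| ≤ 7 / 2 := by
      rw [abs_le]
      constructor <;> linarith [hA1.1, hA1.2, ha1.1, ha1.2, hε16, hs4, hε0 n]
    have h2ma : |2 - a| ≤ 3 := by
      rw [abs_le]
      constructor <;> linarith
    have hprod : |A * B - (4 - a ^ 2)| ≤ 7 / 2 * (8 * ε n) + 3 * (8 * ε n) := by
      have hre : A * B - (4 - a ^ 2) = A * (B - (2 - a)) + (2 - a) * (A - (2 + a)) := by ring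
      rw [hre]
      calc |A * (B - (2 - a)) + (2 - a) * (A - (2 + a))|
          ≤ |A * (B - (2 - a))| + |(2 - a) * (A - (2 + a))| := abs_add_le _ _
        _ = |A| * |B - (2 - a)| + |2 - a| * |A - (2 + a)| := by rw [abs_mul, abs_mul]
        _ ≤ 7 / 2 * (8 * ε n) + 3 * (8 * ε n) := by
            have g1 : |A| * |B - (2 - a)| ≤ 7 / 2 * (8 * ε n) :=
              mul_le_mul hAb hB (abs_nonneg _) (by norm_num)
            have g2 : |2 - a| * |A - (2 + a)| ≤ 3 * (8 * ε n) :=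
              mul_le_mul h2ma hA (abs_nonneg _) (by norm_num)
            linarith
    have g3 : |(4 - a ^ 2) - 4| = a ^ 2 := by
      rw [show (4 : ℝ) - a ^ 2 - 4 = -(a ^ 2) by ring, abs_neg, abs_of_nonneg (sq_nonneg a)]
    have habs := abs_sub_le (A * B) (4 - a ^ 2) 4
    rw [g3] at habs
    linarith [hprod, ha2, hε0 n]
  -- shifted summability
  have hsum' : Summable (fun n : ℕ => M (n + 1)) := (summable_nat_add_iff 1).mpr hsum
  have hεsum : Summable ε := by
    simpa [hεdef] using (hsum.mul_left 2).add (hsum'.mul_left 2)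
  have hev : ∀ᶠ n : ℕ in Filter.atTop, ε n ≤ 1 / 16 :=
    hεsum.tendsto_atTop_zero.eventually (eventually_le_nhds (by norm_num))
  refine Summable.of_norm_bounded_eventually_nat (hεsum.mul_left 68) ?_
  filter_upwards [hev] with n hn
  rw [Real.norm_eq_abs]
  have hk := key n hn
  simp only [hFdef] at hk
  exact hk
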